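/- Let x and r_1, r_2, ... be elements of a differential graded algebra with d(γ_p(x)) = ∑_i r_i d(γ_p(t_i)) for cycles r_i and divided power elements t_i. Then the elements γ_{p^l}(x') defined by x' = x - ∑_i r_i γ_p-corrections, specifically γ_{p^l}(x') = ∑_{j=0}^{p^{l-1}} (-1)^j γ_{p^l - pj}(x) ∑_{|α|=j} ∏_i r_i^{α_i} γ_{pα_i}(t_i), are cycles. -/

import Mathlib

section aux

variable {A : Type*} [CommRing A] {R : Type*} [Semiring R] [Module R A]

lemma d_one' (d : A →ₗ[R] A) (hL : ∀ a b : A, d (a * b) = d a * b + a * d b) :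
    d 1 = 0 := by
  have h := hL 1 1
  simp only [mul_one, one_mul] at h
  exact (left_eq_add.mp h)

lemma d_mul0 (d : A →ₗ[R] A) (hL : ∀ a b : A, d (a * b) = d a * b + a * d b)
    {a b : A} (ha : d a = 0) (hb : d b = 0) : d (a * b) = 0 := by
  rw [hL, ha, hb]; ring

lemma d_pow0 (d : A →ₗ[R] A) (hL : ∀ a b : A, d (a * b) = d a * b + a * d b)
    {a : A} (ha : d a = 0) (k : ℕ) : d (a ^ k) = 0 := by
  induction k with
  | zero => simpa using d_one' d hL
  | succ k ih => rw [pow_succ]; exact d_mul0 d hL ih ha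

lemma d_prod0 (d : A →ₗ[R] A) (hL : ∀ a b : A, d (a * b) = d a * b + a * d b)
    {ι : Type*} (s : Finset ι) (f : ι → A) (hf : ∀ i ∈ s, d (f i) = 0) :
    d (∏ i ∈ s, f i) = 0 := by
  classical
  induction s using Finset.cons_induction with
  | empty => simpa using d_one' d hL
  | cons i s hi ih =>
    rw [Finset.prod_cons]
    exact d_mul0 d hL (hf i (Finset.mem_cons_self i s))
      (ih fun t ht => hf t (Finset.mem_cons_of_mem ht))

/-- Decomposition of a product-sum over `piAntidiag (cons i s)`. -/
lemma sum_piAntidiag_cons {ι : Type*} [DecidableEq ι] (g : ι → ℕ → A)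
    {i : ι} {s : Finset ι} (hi : i ∉ s) (j : ℕ) :
    ∑ f ∈ (Finset.cons i s hi).piAntidiag j, ∏ t ∈ Finset.cons i s hi, g t (f t)
      = ∑ ab ∈ Finset.HasAntidiagonal.antidiagonal j,
          g i ab.1 * ∑ f ∈ s.piAntidiag ab.2, ∏ t ∈ s, g t (f t) := by
  rw [Finset.piAntidiag_cons, Finset.sum_disjiUnion]
  refine Finset.sum_congr rfl fun ab hab => ?_
  rw [Finset.sum_map, Finset.mul_sum]
  refine Finset.sum_congr rfl fun f hf => ?_
  rw [Finset.mem_piAntidiag] at hf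
  have hfi : f i = 0 := by
    by_contra h
    exact hi (hf.2 i h)
  rw [Finset.prod_cons]
  have h1 : (addRightEmbedding fun t => if t = i then ab.1 else 0) f i = ab.1 := by
    simp [addRightEmbedding_apply, hfi]
  have h2 : ∀ t ∈ s,
      g t ((addRightEmbedding fun t => if t = i then ab.1 else 0) f t) = g t (f t) := by
    intro t ht
    have : t ≠ i := fun h => hi (h ▸ ht)
    simp [addRightEmbedding_apply, this]
  rw [h1, Finset.prod_congr rfl h2]

lemma key_diff (d : A →ₗ[R] A) (hL : ∀ a b : A, d (a * b) = d a * b + a * d b)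
    {ι : Type*} [DecidableEq ι] (g : ι → ℕ → A) (c : ι → A)
    (h0 : ∀ i, d (g i 0) = 0) (hs : ∀ i m, d (g i (m + 1)) = c i * g i m) :
    ∀ (s : Finset ι) (j : ℕ),
      d (∑ f ∈ s.piAntidiag (j + 1), ∏ i ∈ s, g i (f i))
        = (∑ i ∈ s, c i) * ∑ f ∈ s.piAntidiag j, ∏ i ∈ s, g i (f i) := by
  intro s
  induction s using Finset.cons_induction with
  | empty => intro j; simp
  | cons i s hi ih =>
    intro j
    have hd0 : ∀ b : ℕ, d (∑ f ∈ s.piAntidiag b, ∏ t ∈ s, g t (f t)) =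
        (if b = 0 then 0 else (∑ t ∈ s, c t) * ∑ f ∈ s.piAntidiag (b - 1), ∏ t ∈ s, g t (f t)) := by
      intro b
      match b with
      | 0 => simp [d_prod0 d hL s _ (fun t _ => h0 t)]
      | b + 1 => simpa using ih b
    rw [sum_piAntidiag_cons, map_sum]
    have hterm : ∀ ab ∈ Finset.HasAntidiagonal.antidiagonal (j + 1),
        d (g i ab.1 * ∑ f ∈ s.piAntidiag ab.2, ∏ t ∈ s, g t (f t)) =
          d (g i ab.1) * (∑ f ∈ s.piAntidiag ab.2, ∏ t ∈ s, g t (f t)) +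
          g i ab.1 * d (∑ f ∈ s.piAntidiag ab.2, ∏ t ∈ s, g t (f t)) :=
      fun ab _ => hL _ _
    rw [Finset.sum_congr rfl hterm, Finset.sum_add_distrib]
    -- first sum
    have e1 : ∑ ab ∈ Finset.HasAntidiagonal.antidiagonal (j + 1),
        d (g i ab.1) * (∑ f ∈ s.piAntidiag ab.2, ∏ t ∈ s, g t (f t)) =
        c i * ∑ ab ∈ Finset.HasAntidiagonal.antidiagonal j,
          g i ab.1 * ∑ f ∈ s.piAntidiag ab.2, ∏ t ∈ s, g t (f t) := by
      rw [Finset.Nat.antidiagonal_succ, Finset.sum_cons, h0 i, zero_mul, zero_add,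
        Finset.sum_map, Finset.mul_sum]
      refine Finset.sum_congr rfl fun ab hab => ?_
      simp only [Function.Embedding.prodMap, Function.Embedding.coeFn_mk,
        Function.Embedding.refl_apply, Prod.map]
      rw [hs i ab.1]
      ring
    -- second sum
    have e2 : ∑ ab ∈ Finset.HasAntidiagonal.antidiagonal (j + 1),
        g i ab.1 * d (∑ f ∈ s.piAntidiag ab.2, ∏ t ∈ s, g t (f t)) =
        (∑ t ∈ s, c t) * ∑ ab ∈ Finset.HasAntidiagonal.antidiagonal j,
          g i ab.1 * ∑ f ∈ s.piAntidiag ab.2, ∏ t ∈ s, g t (f t) := by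
      rw [Finset.Nat.antidiagonal_succ', Finset.sum_cons, hd0 0, if_pos rfl, mul_zero,
        zero_add, Finset.sum_map, Finset.mul_sum]
      refine Finset.sum_congr rfl fun ab hab => ?_
      simp only [Function.Embedding.prodMap, Function.Embedding.coeFn_mk,
        Function.Embedding.refl_apply, Prod.map]
      rw [hd0 (ab.2 + 1)]
      simp only [Nat.succ_ne_zero, if_false, Nat.add_sub_cancel]
      ring
    rw [e1, e2, sum_piAntidiag_cons g hi j, Finset.sum_cons]
    ring

end aux



/-- Correcting divided powers to cycles: in an `F_p`-DGA containing divided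
power families `γ_k(x)` and `γ_k(t_i)` with the differential a derivation
satisfying `d(γ_{p+k}(x)) = (∑_i r_i d(γ_p(t_i)))·γ_k(x)` and
`d(γ_{p+k}(t_i)) = d(γ_p(t_i))·γ_k(t_i)` for cycles `r_i`, the elements
`γ_{p^l}(x') = ∑_{j=0}^{p^{l-1}} (-1)^j γ_{p^l-pj}(x) ∑_{|α|=j} ∏_i r_i^{α_i}
γ_{pα_i}(t_i)` are cycles. -/
theorem stmt_14 (p : ℕ) [Fact p.Prime]
    (A : Type*) [CommRing A] [Algebra (ZMod p) A]
    (d : A →ₗ[ZMod p] A)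
    (hLeibniz : ∀ a b : A, d (a * b) = d a * b + a * d b)
    (N : ℕ) (r : Fin N → A) (hr : ∀ i, d (r i) = 0)
    (γx : ℕ → A) (γt : Fin N → ℕ → A)
    (hγt0 : ∀ i, γt i 0 = 1)
    (hγtmul : ∀ i (a b : ℕ), γt i a * γt i b = ((a + b).choose a) • γt i (a + b))
    (hdx : ∀ m : ℕ, d (γx (p + m)) = (∑ i, r i * d (γt i p)) * γx m)
    (hdx0 : ∀ m : ℕ, m < p → d (γx m) = 0)
    (hdt : ∀ i (m : ℕ), d (γt i (p + m)) = d (γt i p) * γt i m)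
    (hdt0 : ∀ i (m : ℕ), m < p → d (γt i m) = 0) :
    ∀ l : ℕ, 1 ≤ l →
      d (∑ j ∈ Finset.range (p ^ (l - 1) + 1),
          ∑ α ∈ Finset.Nat.antidiagonalTuple N j,
            ((-1 : A) ^ j) *
              (γx (p ^ l - p * j) * ∏ i, r i ^ α i * γt i (p * α i))) = 0 := by
  intro l hl
  have hp : 0 < p := (Fact.out : p.Prime).pos
  obtain ⟨m, rfl⟩ : ∃ m, l = m + 1 := ⟨l - 1, by omega⟩
  set n := p ^ m with hn
  have hl1 : (m + 1) - 1 = m := by omega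
  have hpl : p ^ (m + 1) = p * n := by rw [pow_succ, mul_comm]
  -- the building blocks
  set g : Fin N → ℕ → A := fun i k => r i ^ k * γt i (p * k) with hg
  set c : Fin N → A := fun i => r i * d (γt i p) with hc
  set D : A := ∑ i, c i with hD
  set S : ℕ → A := fun j => ∑ α ∈ Finset.Nat.antidiagonalTuple N j, ∏ i, g i (α i) with hS
  set u : ℕ → A := fun j => γx (p * n - p * j) with hu
  have h0 : ∀ i, d (g i 0) = 0 := by
    intro i
    simp only [hg, pow_zero, one_mul, mul_zero]
    exact hdt0 i 0 hp
  have hsucc : ∀ i k, d (g i (k + 1)) = c i * g i k := by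
    intro i k
    simp only [hg, hc]
    rw [hLeibniz, d_pow0 d hLeibniz (hr i) (k + 1), zero_mul, zero_add]
    have : p * (k + 1) = p + p * k := by ring
    rw [this, hdt i (p * k)]
    ring
  have dS0 : d (S 0) = 0 := by
    simp only [hS, Finset.Nat.antidiagonalTuple_zero_right, Finset.sum_singleton]
    exact d_prod0 d hLeibniz _ _ (fun i _ => by simpa using h0 i)
  have dSsucc : ∀ j, d (S (j + 1)) = D * S j := by
    intro j
    have := key_diff d hLeibniz g c h0 hsucc Finset.univ j
    simpa only [hS, hD, Finset.piAntidiag_univ_fin_eq_antidiagonalTuple] using this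
  have hDD : D = ∑ i, r i * d (γt i p) := rfl
  have hu_last : d (u n) = 0 := by
    simp only [hu, Nat.sub_self]
    exact hdx0 0 hp
  have hu_step : ∀ j, j < n → d (u j) = D * u (j + 1) := by
    intro j hj
    have harith : p * n - p * j = p + (p * n - p * (j + 1)) := by
      have h1 : p * (j + 1) ≤ p * n := Nat.mul_le_mul_left p hj
      have h3 : p * (j + 1) = p * j + p := by ring
      omega
    simp only [hu]
    rw [harith, hdx]
  -- rewrite the goal
  have hrw : ∀ j, (∑ α ∈ Finset.Nat.antidiagonalTuple N j,
      ((-1 : A) ^ j) * (γx (p ^ (m + 1) - p * j) * ∏ i, r i ^ α i * γt i (p * α i)))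
      = (-1 : A) ^ j * (u j * S j) := by
    intro j
    rw [← Finset.mul_sum, ← Finset.mul_sum]
    simp only [hu, hS, hg, hpl]
  rw [hl1, Finset.sum_congr rfl (fun j _ => hrw j), map_sum]
  have hterm : ∀ j, d ((-1 : A) ^ j * (u j * S j)) =
      (-1 : A) ^ j * (d (u j) * S j) + (-1 : A) ^ j * (u j * d (S j)) := by
    intro j
    rw [hLeibniz, d_pow0 d hLeibniz (by rw [map_neg, d_one' d hLeibniz, neg_zero]) j,
      zero_mul, zero_add, hLeibniz]
    ring
  rw [Finset.sum_congr rfl (fun j _ => hterm j), Finset.sum_add_distrib]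
  have e1 : ∑ j ∈ Finset.range (n + 1), (-1 : A) ^ j * (d (u j) * S j)
      = ∑ j ∈ Finset.range n, (-1 : A) ^ j * ((D * u (j + 1)) * S j) := by
    rw [Finset.sum_range_succ, hu_last, zero_mul, mul_zero, add_zero]
    exact Finset.sum_congr rfl fun j hj =>
      by rw [hu_step j (Finset.mem_range.mp hj)]
  have e2 : ∑ j ∈ Finset.range (n + 1), (-1 : A) ^ j * (u j * d (S j))
      = ∑ j ∈ Finset.range n, (-1 : A) ^ (j + 1) * (u (j + 1) * (D * S j)) := by
    rw [Finset.sum_range_succ']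
    rw [dS0, mul_zero, mul_zero, add_zero]
    exact Finset.sum_congr rfl fun j hj => by rw [dSsucc j]
  rw [e1, e2, ← Finset.sum_add_distrib]
  refine Finset.sum_eq_zero fun j hj => ?_
  rw [pow_succ]
  ring
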